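/- Let R be an integral domain with fraction field K, let L = K(α) be a finite field extension of K generated by an element α, and let M = L(β) be a finite Galois extension of L of degree d such that the minimal polynomial of β over L is monic with all coefficients in the subring R[α] of L. Then there exists t ∈ R with t ≠ 0 such that every root β' ∈ M of the minimal polynomial of β over L can be written as β' = Σ_{i=0}^{d−1} (s_i / t) β^i for some elements s_0,…,s_{d−1} ∈ R[α]. -/

import Mathlib

universe u v w x

open Polynomial

section Aux

variable {R : Type u} [CommRing R] [IsDomain R]

lemma aux_mapRL_inj {R : Type u} [CommRing R] [IsDomain R] (K : Type v) [Field K] [Algebra R K] [IsFractionRing R K]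
    {L : Type w} [Field L] [Algebra K L] [Algebra R L] [IsScalarTower R K L] :
    Function.Injective (algebraMap R L) := by
  rw [IsScalarTower.algebraMap_eq R K L]
  exact (algebraMap K L).injective.comp (IsFractionRing.injective R K)

lemma aux_elem {K : Type v} [Field K] [Algebra R K] [IsFractionRing R K]
    {L : Type w} [Field L] [Algebra K L] [Algebra R L] [IsScalarTower R K L]
    [FiniteDimensional K L] (α : L) (hα : IntermediateField.adjoin K {α} = ⊤)
    (x : L) :
    ∃ t : R, t ≠ 0 ∧ ∃ s ∈ Algebra.adjoin R ({α} : Set L), x = s / algebraMap R L t := by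
  have hint : IsIntegral K α := IsIntegral.of_finite K α
  have hx : x ∈ Algebra.adjoin K ({α} : Set L) := by
    have h1 := IntermediateField.adjoin_simple_toSubalgebra_of_isAlgebraic hint.isAlgebraic
    rw [hα, IntermediateField.top_toSubalgebra] at h1
    rw [← h1]; trivial
  rw [Algebra.adjoin_singleton_eq_range_aeval] at hx
  obtain ⟨p, hp'⟩ := hx
  have hp : Polynomial.aeval α p = x := hp'
  obtain ⟨b, hb⟩ : ∃ b : nonZeroDivisors R, ∀ i, algebraMap R K
      ((IsLocalization.integerNormalization (nonZeroDivisors R) p).coeff i) = (b : R) • p.coeff i := by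
    obtain ⟨b, hbM, hb⟩ := IsLocalization.integerNormalization_spec (nonZeroDivisors R) p
    exact ⟨⟨b, hbM⟩, fun i => by rw [← Polynomial.coeff_map, hb, Polynomial.coeff_smul]⟩
  set q := IsLocalization.integerNormalization (nonZeroDivisors R) p with hq
  have hb0 : (b : R) ≠ 0 := nonZeroDivisors.ne_zero b.2
  have hbK : algebraMap R K (b : R) ≠ 0 := fun h =>
    hb0 (IsFractionRing.injective R K (h.trans (map_zero _).symm))
  have hbL : algebraMap R L (b : R) ≠ 0 := fun h =>
    hb0 ((aux_mapRL_inj K) (h.trans (map_zero _).symm))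
  refine ⟨b, hb0, ∑ i ∈ Finset.range (p.natDegree + 1),
    algebraMap R L (q.coeff i) * α ^ i, ?_, ?_⟩
  · exact Subalgebra.sum_mem _ fun i _ => mul_mem
      (Subalgebra.algebraMap_mem _ _)
      (pow_mem (Algebra.self_mem_adjoin_singleton R α) i)
  · rw [Finset.sum_div, ← hp, Polynomial.aeval_eq_sum_range]
    refine Finset.sum_congr rfl fun i _ => ?_
    have hco : p.coeff i = algebraMap R K (q.coeff i) / algebraMap R K (b : R) := by
      rw [eq_div_iff hbK, hb i, Algebra.smul_def, mul_comm]
    rw [Algebra.smul_def, hco, map_div₀, ← IsScalarTower.algebraMap_apply,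
      ← IsScalarTower.algebraMap_apply, div_mul_eq_mul_div]

lemma aux_family {K : Type v} [Field K] [Algebra R K] [IsFractionRing R K]
    {L : Type w} [Field L] [Algebra K L] [Algebra R L] [IsScalarTower R K L]
    [FiniteDimensional K L] {ι : Type*} [Fintype ι]
    (α : L) (hα : IntermediateField.adjoin K {α} = ⊤) (f : ι → L) :
    ∃ t : R, t ≠ 0 ∧ ∀ i, ∃ s ∈ Algebra.adjoin R ({α} : Set L),
      f i = s / algebraMap R L t := by
  classical
  choose t ht s hs hf using fun i => aux_elem (R := R) (K := K) α hα (f i)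
  refine ⟨∏ i, t i, Finset.prod_ne_zero_iff.2 fun i _ => ht i, fun i => ?_⟩
  set c : R := ∏ j ∈ Finset.univ.erase i, t j with hc
  have hc0 : c ≠ 0 := Finset.prod_ne_zero_iff.2 fun j _ => ht j
  have hcL : algebraMap R L c ≠ 0 := fun h =>
    hc0 ((aux_mapRL_inj K) (h.trans (map_zero _).symm))
  refine ⟨s i * algebraMap R L c,
    mul_mem (hs i) (Subalgebra.algebraMap_mem _ _), ?_⟩
  rw [hf i, ← Finset.mul_prod_erase _ _ (Finset.mem_univ i), map_mul, ← hc,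
    mul_div_mul_right _ _ hcL]

end Aux

/-- Let `R` be a domain with fraction field `K`, `L = K(α)` a finite extension
of `K`, and `M = L(β)` a finite Galois extension of `L` of degree `d` such that the minimal
polynomial of `β` over `L` has all its coefficients in `R[α]`.  Then there exists a nonzero
`t ∈ R` such that each conjugate `β'` of `β` over `L` can be written as
`β' = Σ_{i<d} (s_i / t) β^i` with `s_0, …, s_{d-1} ∈ R[α]`. -/
theorem conjugates_have_common_denominator
    (R : Type u) [CommRing R] [IsDomain R]
    (K : Type v) [Field K] [Algebra R K] [IsFractionRing R K]
    (L : Type w) [Field L] [Algebra K L] [FiniteDimensional K L]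
    [Algebra R L] [IsScalarTower R K L]
    (α : L) (hα : IntermediateField.adjoin K {α} = ⊤)
    (M : Type x) [Field M] [Algebra L M] [FiniteDimensional L M] [IsGalois L M]
    (d : ℕ) (hd : Module.finrank L M = d)
    (β : M) (hβ : IntermediateField.adjoin L {β} = ⊤)
    (hcoeff : ∀ i : ℕ, (minpoly L β).coeff i ∈ Algebra.adjoin R ({α} : Set L)) :
    ∃ t : R, t ≠ 0 ∧
      ∀ β' : M, Polynomial.aeval β' (minpoly L β) = 0 →
        ∃ s : Fin d → L, (∀ i, s i ∈ Algebra.adjoin R ({α} : Set L)) ∧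
          β' = ∑ i : Fin d, algebraMap L M (s i / algebraMap R L t) * β ^ (i : ℕ) := by
  classical
  have hβint : IsIntegral L β := IsIntegral.of_finite L β
  have hmonic : (minpoly L β).Monic := minpoly.monic hβint
  have hne : minpoly L β ≠ 0 := hmonic.ne_zero
  have hdegnat : (minpoly L β).natDegree = d := by
    rw [← hd, ← IntermediateField.adjoin.finrank hβint, hβ, IntermediateField.finrank_top']
  have hd0 : 0 < d := hd ▸ Module.finrank_pos
  have halg : Algebra.adjoin L ({β} : Set M) = ⊤ := by
    have h1 := IntermediateField.adjoin_simple_toSubalgebra_of_isAlgebraic hβint.isAlgebraic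
    rw [hβ, IntermediateField.top_toSubalgebra] at h1
    exact h1.symm
  -- key: every element of M has such a representation (with its own denominator)
  have key : ∀ x : M, ∃ t : R, t ≠ 0 ∧ ∃ s : Fin d → L,
      (∀ i, s i ∈ Algebra.adjoin R ({α} : Set L)) ∧
      x = ∑ i : Fin d, algebraMap L M (s i / algebraMap R L t) * β ^ (i : ℕ) := by
    intro x
    have hx : x ∈ Algebra.adjoin L ({β} : Set M) := halg ▸ trivial
    rw [Algebra.adjoin_singleton_eq_range_aeval] at hx
    obtain ⟨p, hp'⟩ := hx
    have hp : Polynomial.aeval β p = x := hp'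
    set r := p %ₘ minpoly L β with hr
    have hxr : Polynomial.aeval β r = x := by
      conv_rhs => rw [← hp, ← Polynomial.modByMonic_add_div p (minpoly L β)]
      simp only [map_add, map_mul, minpoly.aeval, zero_mul, add_zero, hr]
    have hrd : r.natDegree < d := by
      rcases eq_or_ne r 0 with h | h
      · simpa [h] using hd0
      · refine Polynomial.natDegree_lt_natDegree h ?_ |>.trans_le hdegnat.le
        exact Polynomial.degree_modByMonic_lt p hmonic
    obtain ⟨t, ht, hts⟩ := aux_family (R := R) (K := K) α hα (fun i : Fin d => r.coeff i)
    choose s hs hsc using hts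
    refine ⟨t, ht, s, hs, ?_⟩
    rw [← hxr, Polynomial.aeval_eq_sum_range' hrd, ← Fin.sum_univ_eq_sum_range]
    refine Finset.sum_congr rfl fun i _ => ?_
    rw [← hsc i, Algebra.smul_def]
  choose tt htt ss hss hsum using key
  set S : Finset M := ((minpoly L β).aroots M).toFinset with hS
  refine ⟨∏ x ∈ S, tt x, Finset.prod_ne_zero_iff.2 fun x _ => htt x, fun β' hβ' => ?_⟩
  have hmem : β' ∈ S := by
    rw [hS, Multiset.mem_toFinset, Polynomial.mem_aroots]
    exact ⟨hne, hβ'⟩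
  set c : R := ∏ x ∈ S.erase β', tt x with hc
  have hc0 : c ≠ 0 := Finset.prod_ne_zero_iff.2 fun x _ => htt x
  have hcL : algebraMap R L c ≠ 0 := fun h =>
    hc0 ((aux_mapRL_inj K) (h.trans (map_zero _).symm))
  refine ⟨fun i => ss β' i * algebraMap R L c,
    fun i => mul_mem (hss β' i) (Subalgebra.algebraMap_mem _ _), ?_⟩
  conv_lhs => rw [hsum β']
  refine Finset.sum_congr rfl fun i _ => ?_
  rw [← Finset.mul_prod_erase _ _ hmem, map_mul, ← hc, mul_div_mul_right _ _ hcL]
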